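/- Let S be a commutative semiring, let 𝔭 be a z-ideal of S, and let 𝔞 be any ideal of S. If 𝔞² ⊆ 𝔭, then 𝔞 ⊆ 𝔭. (In particular, every proper z-ideal is z-semiprime.) -/
import Mathlib

/-- An ideal `I` of a commutative semiring is a *z-ideal* if for every `x ∈ I`,
the intersection of all maximal ideals containing `x` is contained in `I`. -/
def IsZIdeal {S : Type*} [CommSemiring S] (I : Ideal S) : Prop :=
  ∀ x ∈ I, sInf {m : Ideal S | m.IsMaximal ∧ x ∈ m} ≤ I

theorem zIdeal_semiprime {S : Type*} [CommSemiring S] (p : Ideal S) (hp : IsZIdeal p)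
    (a : Ideal S) (h : a * a ≤ p) : a ≤ p := by
  intro x hx
  have hx2 : x * x ∈ p := h (Ideal.mul_mem_mul hx hx)
  refine hp _ hx2 ?_
  rw [Ideal.mem_sInf]
  rintro m ⟨hm, hxm⟩
  exact (hm.isPrime.mem_or_mem hxm).elim id id
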